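/- arXiv:2603.17572 — 2 statements merged into one kernel-verified Lean document; each statement's English description precedes it below -/
import Mathlib

section
/- Let V, φ : ℝ² → ℝ be twice continuously differentiable, let D > 0, Z > 0, let ρ_s(x) = Z⁻¹ exp(−V(x)/D), and let u₂ ∈ ℝ be a constant. Then for every x ∈ ℝ², ∇·( ρ_s(x)·( ∇V(x) + u₂·ρ_s(x)⁻¹·∇⊥φ(x) ) ) + D·Δρ_s(x) = 0. Hence ρ_s remains a stationary distribution of the controlled Fokker–Planck equation ∂_tρ = ∇·(ρ(∇V + u₁∇α + u₂ρ_s⁻¹∇⊥φ)) + DΔρ when u₁ = 0 and u₂ is constant. -/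
open Real MeasureTheory

/-- Partial derivative in the `x` direction. -/
noncomputable def pdx (f : ℝ × ℝ → ℝ) (p : ℝ × ℝ) : ℝ := fderiv ℝ f p (1, 0)

/-- Partial derivative in the `y` direction. -/
noncomputable def pdy (f : ℝ × ℝ → ℝ) (p : ℝ × ℝ) : ℝ := fderiv ℝ f p (0, 1)

/-- Gradient of a scalar field on `ℝ²`. -/
noncomputable def grad (f : ℝ × ℝ → ℝ) (p : ℝ × ℝ) : ℝ × ℝ := (pdx f p, pdy f p)

/-- Perpendicular gradient `∇⊥f = (∂_y f, -∂_x f)`. -/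
noncomputable def gradPerp (f : ℝ × ℝ → ℝ) (p : ℝ × ℝ) : ℝ × ℝ := (pdy f p, -pdx f p)

/-- Divergence of a vector field on `ℝ²`. -/
noncomputable def div2 (F : ℝ × ℝ → ℝ × ℝ) (p : ℝ × ℝ) : ℝ :=
  pdx (fun q => (F q).1) p + pdy (fun q => (F q).2) p

/-- Laplacian of a scalar field on `ℝ²`. -/
noncomputable def lap (f : ℝ × ℝ → ℝ) (p : ℝ × ℝ) : ℝ := pdx (pdx f) p + pdy (pdy f) p

/-- Scalar curl (flux rotation) of a vector field on `ℝ²`. -/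
noncomputable def curl2 (F : ℝ × ℝ → ℝ × ℝ) (p : ℝ × ℝ) : ℝ :=
  pdx (fun q => (F q).2) p - pdy (fun q => (F q).1) p

lemma aux_pd_diff (f : ℝ × ℝ → ℝ) (hf : ContDiff ℝ 2 f) (v : ℝ × ℝ) :
    Differentiable ℝ (fun q => fderiv ℝ f q v) :=
  (ContinuousLinearMap.apply ℝ ℝ v).differentiable.comp
    ((hf.fderiv_right (m := 1) (by norm_num)).differentiable (by norm_num))

lemma aux_swap (f : ℝ × ℝ → ℝ) (hf : ContDiff ℝ 2 f) (p v w : ℝ × ℝ) :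
    fderiv ℝ (fun q => fderiv ℝ f q v) p w = fderiv ℝ (fderiv ℝ f) p w v := by
  have hd : DifferentiableAt ℝ (fderiv ℝ f) p :=
    ((hf.fderiv_right (m := 1) (by norm_num)).differentiable (by norm_num)).differentiableAt
  have h := ((ContinuousLinearMap.apply ℝ ℝ v).hasFDerivAt).comp p hd.hasFDerivAt
  have h' : HasFDerivAt (fun q => fderiv ℝ f q v)
      (((ContinuousLinearMap.apply ℝ ℝ v)).comp (fderiv ℝ (fderiv ℝ f) p)) p := h
  rw [h'.fderiv]; rfl

lemma aux_schwarz (f : ℝ × ℝ → ℝ) (hf : ContDiff ℝ 2 f) (p : ℝ × ℝ) :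
    pdx (pdy f) p = pdy (pdx f) p := by
  have hsymm : fderiv ℝ (fderiv ℝ f) p (1, 0) (0, 1)
      = fderiv ℝ (fderiv ℝ f) p (0, 1) (1, 0) :=
    second_derivative_symmetric (fun y => (hf.differentiable (by norm_num) y).hasFDerivAt)
      (((hf.fderiv_right (m := 1) (by norm_num)).differentiable (by norm_num) p).hasFDerivAt) _ _
  have e1 : pdy f = fun q => fderiv ℝ f q (0, 1) := rfl
  have e2 : pdx f = fun q => fderiv ℝ f q (1, 0) := rfl
  simp only [pdx, pdy, e1, e2]
  rw [aux_swap f hf p (0, 1) (1, 0), aux_swap f hf p (1, 0) (0, 1), hsymm]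

/-- With `u₁ = 0` and constant `u₂`, the Gibbs density `ρ_s` remains a
stationary distribution of the controlled Fokker–Planck equation:
`∇·(ρ_s (∇V + u₂ ρ_s⁻¹ ∇⊥φ)) + D Δρ_s = 0`. -/
theorem gibbs_density_stationary_controlled
    (V φ : ℝ × ℝ → ℝ) (hV : ContDiff ℝ 2 V) (hφ : ContDiff ℝ 2 φ)
    (D Z : ℝ) (hD : 0 < D) (hZ : 0 < Z)
    (ρs : ℝ × ℝ → ℝ) (hρs : ∀ p, ρs p = Z⁻¹ * Real.exp (-V p / D)) (u₂ : ℝ) :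
    ∀ p : ℝ × ℝ,
      div2 (fun q => ρs q • (grad V q + u₂ • ((ρs q)⁻¹ • gradPerp φ q))) p
        + D * lap ρs p = 0 := by
  have hρfun : ρs = fun p => Z⁻¹ * Real.exp (-V p / D) := funext hρs
  subst hρfun
  set ρ : ℝ × ℝ → ℝ := fun p => Z⁻¹ * Real.exp (-V p / D) with hρ
  have hVd : Differentiable ℝ V := hV.differentiable (by norm_num)
  have hρC : ContDiff ℝ 2 ρ :=
    contDiff_const.mul (Real.contDiff_exp.comp ((hV.neg).div_const D))
  have hρpos : ∀ q, 0 < ρ q := fun q => mul_pos (inv_pos.mpr hZ) (Real.exp_pos _)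
  -- derivative of ρ
  have hρderiv : ∀ q v, fderiv ℝ ρ q v = -D⁻¹ * ρ q * fderiv ℝ V q v := by
    intro q v
    have h1 : HasFDerivAt V (fderiv ℝ V q) q := (hVd q).hasFDerivAt
    have h2 : HasFDerivAt (fun x => -V x / D) (D⁻¹ • -fderiv ℝ V q) q := by
      simpa [div_eq_mul_inv, smul_smul, mul_comm] using (h1.neg).mul_const D⁻¹
    have h4 := (h2.exp).const_mul Z⁻¹
    rw [h4.fderiv]
    simp [hρ]
    ring
  have hρx : ∀ q, ρ q * pdx V q = -D * pdx ρ q := by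
    intro q
    simp only [pdx, hρderiv]
    field_simp
  have hρy : ∀ q, ρ q * pdy V q = -D * pdy ρ q := by
    intro q
    simp only [pdy, hρderiv]
    field_simp
  intro p
  have hF1 : (fun q => ((ρ q • (grad V q + u₂ • ((ρ q)⁻¹ • gradPerp φ q)) : ℝ × ℝ)).1)
      = fun q => -D * pdx ρ q + u₂ * pdy φ q := by
    funext q
    have hne : ρ q ≠ 0 := (hρpos q).ne'
    simp only [grad, gradPerp, Prod.smul_mk, Prod.mk_add_mk, smul_eq_mul]
    rw [← hρx q]
    field_simp
  have hF2 : (fun q => ((ρ q • (grad V q + u₂ • ((ρ q)⁻¹ • gradPerp φ q)) : ℝ × ℝ)).2)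
      = fun q => -D * pdy ρ q - u₂ * pdx φ q := by
    funext q
    have hne : ρ q ≠ 0 := (hρpos q).ne'
    simp only [grad, gradPerp, Prod.smul_mk, Prod.mk_add_mk, smul_eq_mul]
    rw [← hρy q]
    field_simp
    ring
  have e1 : pdx (fun q => -D * pdx ρ q + u₂ * pdy φ q) p
      = -D * pdx (pdx ρ) p + u₂ * pdx (pdy φ) p := by
    have h1 : HasFDerivAt (fun q => -D * pdx ρ q + u₂ * pdy φ q)
        ((-D) • fderiv ℝ (pdx ρ) p + u₂ • fderiv ℝ (pdy φ) p) p :=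
      ((((aux_pd_diff ρ hρC (1, 0)) p).hasFDerivAt).const_mul (-D)).add
        ((((aux_pd_diff φ hφ (0, 1)) p).hasFDerivAt).const_mul u₂)
    show fderiv ℝ (fun q => -D * pdx ρ q + u₂ * pdy φ q) p (1, 0) = _
    rw [h1.fderiv]
    simp [pdx, pdy]
  have e2 : pdy (fun q => -D * pdy ρ q - u₂ * pdx φ q) p
      = -D * pdy (pdy ρ) p - u₂ * pdy (pdx φ) p := by
    have h1 : HasFDerivAt (fun q => -D * pdy ρ q - u₂ * pdx φ q)
        ((-D) • fderiv ℝ (pdy ρ) p - u₂ • fderiv ℝ (pdx φ) p) p :=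
      ((((aux_pd_diff ρ hρC (0, 1)) p).hasFDerivAt).const_mul (-D)).sub
        ((((aux_pd_diff φ hφ (1, 0)) p).hasFDerivAt).const_mul u₂)
    show fderiv ℝ (fun q => -D * pdy ρ q - u₂ * pdx φ q) p (0, 1) = _
    rw [h1.fderiv]
    simp [pdx, pdy]
  show pdx (fun q => ((ρ q • (grad V q + u₂ • ((ρ q)⁻¹ • gradPerp φ q)) : ℝ × ℝ)).1) p
      + pdy (fun q => ((ρ q • (grad V q + u₂ • ((ρ q)⁻¹ • gradPerp φ q)) : ℝ × ℝ)).2) p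
      + D * lap ρ p = 0
  rw [hF1, hF2, e1, e2, lap, aux_schwarz φ hφ p]
  ring
end

section
/- Let V, α, φ, ρ : ℝ² → ℝ be twice continuously differentiable, let D > 0, Z > 0, let ρ_s(x) = Z⁻¹ exp(−V(x)/D), and let u₁, u₂ ∈ ℝ. Define the controlled probability flux J̃ = −ρ( ∇V + u₁∇α + u₂ρ_s⁻¹∇⊥φ ) − D∇ρ. Then the flux rotation satisfies, for every x ∈ ℝ², ∇×J̃(x) = ⟨∇⊥ρ(x), ∇V(x)⟩ + u₁·⟨∇⊥ρ(x), ∇α(x)⟩ + u₂·( ⟨∇(ρ/ρ_s)(x), ∇φ(x)⟩ + (ρ/ρ_s)(x)·Δφ(x) ). -/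
open Real MeasureTheory

/-- The directional-derivative field of a `C²` function is differentiable. -/
lemma differentiable_pd {f : ℝ × ℝ → ℝ} (hf : ContDiff ℝ 2 f) (w : ℝ × ℝ) :
    Differentiable ℝ (fun q => fderiv ℝ f q w) := by
  have h1 : ContDiff ℝ 1 (fderiv ℝ f) := hf.fderiv_right (by norm_num)
  exact (h1.clm_apply contDiff_const).differentiable one_ne_zero

/-- Symmetry of second partial derivatives for `C²` functions. -/
lemma pd_symm {f : ℝ × ℝ → ℝ} (hf : ContDiff ℝ 2 f) (p v w : ℝ × ℝ) :
    fderiv ℝ (fun q => fderiv ℝ f q w) p v = fderiv ℝ (fun q => fderiv ℝ f q v) p w := by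
  have hd : DifferentiableAt ℝ (fderiv ℝ f) p :=
    ((hf.fderiv_right (m := 1) (by norm_num)).differentiable one_ne_zero) p
  have hsymm : IsSymmSndFDerivAt ℝ f p := hf.contDiffAt.isSymmSndFDerivAt (by norm_num)
  rw [fderiv_clm_apply hd (differentiableAt_const w),
      fderiv_clm_apply hd (differentiableAt_const v)]
  simp [hsymm v w]

/-- Product rule for directional derivatives. -/
lemma pd_mul {f g : ℝ × ℝ → ℝ} {p : ℝ × ℝ} (hf : DifferentiableAt ℝ f p)
    (hg : DifferentiableAt ℝ g p) (v : ℝ × ℝ) :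
    fderiv ℝ (fun q => f q * g q) p v
      = fderiv ℝ f p v * g p + f p * fderiv ℝ g p v := by
  rw [fderiv_fun_mul hf hg]
  simp [smul_eq_mul]
  ring

/-- Linearity of the directional derivative over the particular combination we need. -/
lemma pd_comb {f₁ f₂ f₃ f₄ : ℝ × ℝ → ℝ} {p : ℝ × ℝ} (c₁ c₂ c₃ : ℝ)
    (h₁ : DifferentiableAt ℝ f₁ p) (h₂ : DifferentiableAt ℝ f₂ p)
    (h₃ : DifferentiableAt ℝ f₃ p) (h₄ : DifferentiableAt ℝ f₄ p) (v : ℝ × ℝ) :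
    fderiv ℝ (fun q => -(f₁ q) - c₁ * f₂ q + c₂ * f₃ q - c₃ * f₄ q) p v
      = -(fderiv ℝ f₁ p v) - c₁ * fderiv ℝ f₂ p v + c₂ * fderiv ℝ f₃ p v
        - c₃ * fderiv ℝ f₄ p v := by
  have H := (((h₁.hasFDerivAt.neg.sub (h₂.hasFDerivAt.const_mul c₁)).add
      (h₃.hasFDerivAt.const_mul c₂)).sub (h₄.hasFDerivAt.const_mul c₃))
  rw [(show HasFDerivAt (fun q => -(f₁ q) - c₁ * f₂ q + c₂ * f₃ q - c₃ * f₄ q) _ p from H).fderiv]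
  simp [smul_eq_mul]

/-- Flux rotation of the controlled probability flux
`J̃ = -ρ(∇V + u₁∇α + u₂ρ_s⁻¹∇⊥φ) - D∇ρ`:
`∇×J̃ = ⟨∇⊥ρ, ∇V⟩ + u₁⟨∇⊥ρ, ∇α⟩ + u₂(⟨∇(ρ/ρ_s), ∇φ⟩ + (ρ/ρ_s)Δφ)`. -/
theorem curl_of_controlled_flux
    (V α φ ρ : ℝ × ℝ → ℝ)
    (hV : ContDiff ℝ 2 V) (hα : ContDiff ℝ 2 α) (hφ : ContDiff ℝ 2 φ)
    (hρ : ContDiff ℝ 2 ρ)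
    (D Z : ℝ) (hD : 0 < D) (hZ : 0 < Z)
    (ρs : ℝ × ℝ → ℝ) (hρs : ∀ x, ρs x = Z⁻¹ * Real.exp (-V x / D))
    (u₁ u₂ : ℝ) :
    ∀ p : ℝ × ℝ,
      curl2 (fun q =>
          -(ρ q • (grad V q + u₁ • grad α q + u₂ • ((ρs q)⁻¹ • gradPerp φ q)))
            - D • grad ρ q) p
        = (pdy ρ p * pdx V p + (-pdx ρ p) * pdy V p)
          + u₁ * (pdy ρ p * pdx α p + (-pdx ρ p) * pdy α p)
          + u₂ * ((pdx (fun q => ρ q / ρs q) p * pdx φ p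
                    + pdy (fun q => ρ q / ρs q) p * pdy φ p)
                  + (ρ p / ρs p) * lap φ p) := by
  intro p
  -- regularity and nonvanishing of `ρs`
  have hρsC : ContDiff ℝ 2 ρs := by
    rw [funext hρs]
    exact contDiff_const.mul ((hV.neg.div_const D).exp)
  have hρs_ne : ∀ q, ρs q ≠ 0 := by
    intro q
    rw [hρs q]
    positivity
  have hgC : ContDiff ℝ 2 (fun q => ρ q / ρs q) := hρ.div hρsC hρs_ne
  -- differentiability facts
  have dρ : Differentiable ℝ ρ := hρ.differentiable two_ne_zero
  have dg : Differentiable ℝ (fun q => ρ q / ρs q) := hgC.differentiable two_ne_zero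
  have dVx := differentiable_pd hV (1, 0)
  have dVy := differentiable_pd hV (0, 1)
  have dαx := differentiable_pd hα (1, 0)
  have dαy := differentiable_pd hα (0, 1)
  have dφx := differentiable_pd hφ (1, 0)
  have dφy := differentiable_pd hφ (0, 1)
  have dρx := differentiable_pd hρ (1, 0)
  have dρy := differentiable_pd hρ (0, 1)
  -- the two components of the flux as explicit scalar functions
  have hF2 : (fun q => (-(ρ q • (grad V q + u₁ • grad α q + u₂ • ((ρs q)⁻¹ • gradPerp φ q)))
        - D • grad ρ q).2)
      = fun q => -(ρ q * fderiv ℝ V q (0, 1)) - u₁ * (ρ q * fderiv ℝ α q (0, 1))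
          + u₂ * ((ρ q / ρs q) * fderiv ℝ φ q (1, 0)) - D * fderiv ℝ ρ q (0, 1) := by
    funext q
    simp [grad, gradPerp, pdx, pdy, div_eq_mul_inv]
    ring
  have hF1 : (fun q => (-(ρ q • (grad V q + u₁ • grad α q + u₂ • ((ρs q)⁻¹ • gradPerp φ q)))
        - D • grad ρ q).1)
      = fun q => -(ρ q * fderiv ℝ V q (1, 0)) - u₁ * (ρ q * fderiv ℝ α q (1, 0))
          + (-u₂) * ((ρ q / ρs q) * fderiv ℝ φ q (0, 1)) - D * fderiv ℝ ρ q (1, 0) := by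
    funext q
    simp [grad, gradPerp, pdx, pdy, div_eq_mul_inv]
    ring
  have e2 : pdx (fun q => (-(ρ q • (grad V q + u₁ • grad α q + u₂ • ((ρs q)⁻¹ • gradPerp φ q)))
        - D • grad ρ q).2) p
      = -(fderiv ℝ ρ p (1, 0) * fderiv ℝ V p (0, 1)
            + ρ p * fderiv ℝ (fun q => fderiv ℝ V q (1, 0)) p (0, 1))
        - u₁ * (fderiv ℝ ρ p (1, 0) * fderiv ℝ α p (0, 1)
            + ρ p * fderiv ℝ (fun q => fderiv ℝ α q (1, 0)) p (0, 1))
        + u₂ * (fderiv ℝ (fun q => ρ q / ρs q) p (1, 0) * fderiv ℝ φ p (1, 0)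
            + (ρ p / ρs p) * fderiv ℝ (fun q => fderiv ℝ φ q (1, 0)) p (1, 0))
        - D * fderiv ℝ (fun q => fderiv ℝ ρ q (1, 0)) p (0, 1) := by
    rw [hF2]
    unfold pdx
    rw [pd_comb u₁ u₂ D ((dρ p).fun_mul (dVy p)) ((dρ p).fun_mul (dαy p)) ((dg p).fun_mul (dφx p)) (dρy p)]
    rw [pd_mul (dρ p) (dVy p), pd_mul (dρ p) (dαy p), pd_mul (dg p) (dφx p)]
    rw [pd_symm hV p (1, 0) (0, 1), pd_symm hα p (1, 0) (0, 1), pd_symm hρ p (1, 0) (0, 1)]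
  have e1 : pdy (fun q => (-(ρ q • (grad V q + u₁ • grad α q + u₂ • ((ρs q)⁻¹ • gradPerp φ q)))
        - D • grad ρ q).1) p
      = -(fderiv ℝ ρ p (0, 1) * fderiv ℝ V p (1, 0)
            + ρ p * fderiv ℝ (fun q => fderiv ℝ V q (1, 0)) p (0, 1))
        - u₁ * (fderiv ℝ ρ p (0, 1) * fderiv ℝ α p (1, 0)
            + ρ p * fderiv ℝ (fun q => fderiv ℝ α q (1, 0)) p (0, 1))
        + (-u₂) * (fderiv ℝ (fun q => ρ q / ρs q) p (0, 1) * fderiv ℝ φ p (0, 1)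
            + (ρ p / ρs p) * fderiv ℝ (fun q => fderiv ℝ φ q (0, 1)) p (0, 1))
        - D * fderiv ℝ (fun q => fderiv ℝ ρ q (1, 0)) p (0, 1) := by
    rw [hF1]
    unfold pdy
    rw [pd_comb u₁ (-u₂) D ((dρ p).fun_mul (dVx p)) ((dρ p).fun_mul (dαx p)) ((dg p).fun_mul (dφy p)) (dρx p)]
    rw [pd_mul (dρ p) (dVx p), pd_mul (dρ p) (dαx p), pd_mul (dg p) (dφy p)]
  simp only [curl2]
  rw [e2, e1]
  unfold lap pdx pdy
  ring
end
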